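/- Let ψ(t) = t·exp(−1/t) for t > 0 and suppose h₂ is real analytic at 0 with power series h₂(s) = Σ a_k s^k. Then for every n ≥ 1, the n-th derivative of t ↦ h₂(ψ(t)) tends to 0 as t → 0⁺. -/

import Mathlib

open Set Filter Polynomial

noncomputable def Pq : ℕ → Polynomial ℝ
  | 0 => 1 + X
  | (k+1) => X^2 * (Pq k - derivative (Pq k))

lemma hasDerivAt_aux (q : Polynomial ℝ) {t : ℝ} (ht : t ≠ 0) :
    HasDerivAt (fun t : ℝ => q.eval t⁻¹ * Real.exp (-1 / t))
      ((X^2 * (q - derivative q)).eval t⁻¹ * Real.exp (-1 / t)) t := by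
  have h1 : HasDerivAt (fun t : ℝ => t⁻¹) (-(t^2)⁻¹) t := hasDerivAt_inv ht
  have h2 : HasDerivAt (fun t : ℝ => q.eval t⁻¹) ((derivative q).eval t⁻¹ * (-(t^2)⁻¹)) t :=
    (q.hasDerivAt t⁻¹).comp t h1
  have h3 : HasDerivAt (fun t : ℝ => -1 / t) ((t^2)⁻¹) t := by
    have : HasDerivAt (fun t : ℝ => -(t⁻¹)) (-(-(t^2)⁻¹)) t := h1.neg
    simpa [neg_div, one_div] using this
  have h4 : HasDerivAt (fun t : ℝ => Real.exp (-1 / t))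
      (Real.exp (-1 / t) * (t^2)⁻¹) t := (Real.hasDerivAt_exp _).comp t h3
  have h5 : HasDerivAt (fun t : ℝ => q.eval t⁻¹ * Real.exp (-1 / t)) _ t := h2.mul h4
  convert h5 using 1
  have ht2 : (t^2 : ℝ) ≠ 0 := pow_ne_zero 2 ht
  simp only [eval_mul, eval_sub, eval_pow, eval_X]
  field_simp
  ring

lemma tendsto_aux (q : Polynomial ℝ) :
    Tendsto (fun t : ℝ => q.eval t⁻¹ * Real.exp (-1 / t)) (nhdsWithin 0 (Ioi 0)) (nhds 0) := by
  have key : Tendsto (fun x : ℝ => q.eval x * Real.exp (-x)) atTop (nhds 0) := by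
    have : ∀ x : ℝ, q.eval x * Real.exp (-x)
        = ∑ k ∈ Finset.range (q.natDegree + 1), q.coeff k * (x ^ k * Real.exp (-x)) := by
      intro x
      rw [q.eval_eq_sum_range, Finset.sum_mul]
      exact Finset.sum_congr rfl fun k _ => by ring
    simp only [this]
    have := tendsto_finset_sum (Finset.range (q.natDegree + 1))
      (fun k _ => (Real.tendsto_pow_mul_exp_neg_atTop_nhds_zero k).const_mul (q.coeff k))
    simpa using this
  have hcomp := key.comp tendsto_inv_nhdsGT_zero
  refine hcomp.congr fun t => ?_
  simp [Function.comp, neg_div, one_div]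

lemma iteratedDeriv_psi (k : ℕ) : ∀ t ∈ Ioi (0:ℝ),
    iteratedDeriv (k+1) (fun t : ℝ => t * Real.exp (-1 / t)) t
      = (Pq k).eval t⁻¹ * Real.exp (-1 / t) := by
  induction k with
  | zero =>
    intro t ht
    have ht' : t ≠ 0 := ne_of_gt ht
    have h3 : HasDerivAt (fun t : ℝ => -1 / t) ((t^2)⁻¹) t := by
      have : HasDerivAt (fun t : ℝ => -(t⁻¹)) (-(-(t^2)⁻¹)) t := (hasDerivAt_inv ht').neg
      simpa [neg_div, one_div] using this
    have h4 : HasDerivAt (fun t : ℝ => Real.exp (-1 / t))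
        (Real.exp (-1 / t) * (t^2)⁻¹) t := (Real.hasDerivAt_exp _).comp t h3
    have h5 : HasDerivAt (fun t : ℝ => t * Real.exp (-1 / t))
        (1 * Real.exp (-1 / t) + t * (Real.exp (-1 / t) * (t^2)⁻¹)) t := by
      have h6 : HasDerivAt (fun t : ℝ => t * Real.exp (-1 / t)) _ t := (hasDerivAt_id t).mul h4
      simpa using h6
    rw [iteratedDeriv_one, h5.deriv]
    have ht2 : (t^2 : ℝ) ≠ 0 := pow_ne_zero 2 ht'
    simp only [Pq, eval_add, eval_one, eval_X]
    field_simp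
  | succ k ih =>
    intro t ht
    rw [iteratedDeriv_succ]
    have heq : iteratedDeriv (k+1) (fun t : ℝ => t * Real.exp (-1 / t))
        =ᶠ[nhds t] fun t => (Pq k).eval t⁻¹ * Real.exp (-1 / t) := by
      filter_upwards [isOpen_Ioi.mem_nhds ht] with s hs using ih s hs
    rw [heq.deriv_eq, (hasDerivAt_aux (Pq k) (ne_of_gt ht)).deriv]
    rfl


theorem comp_deriv_tendsto_zero
    (h₂ : ℝ → ℝ) (hh₂ : AnalyticAt ℝ h₂ 0) (n : ℕ) (hn : 1 ≤ n) :
    Tendsto (iteratedDeriv n (fun t : ℝ => h₂ (t * Real.exp (-1 / t))))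
      (nhdsWithin 0 (Ioi 0)) (nhds 0) := by
  set ψ : ℝ → ℝ := fun t : ℝ => t * Real.exp (-1 / t) with hψdef
  have hexp : Tendsto (fun t : ℝ => Real.exp (-1 / t)) (nhdsWithin 0 (Ioi 0)) (nhds 0) := by
    simpa using tendsto_aux 1
  have hψ0 : Tendsto ψ (nhdsWithin 0 (Ioi 0)) (nhds 0) := by
    simpa using (tendsto_id.mono_left nhdsWithin_le_nhds).mul hexp
  -- a ball around 0 where h₂ is smooth
  have hcd : ContDiffAt ℝ (n : WithTop ℕ∞) h₂ 0 := hh₂.contDiffAt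
  obtain ⟨u, hu_nhds, hu⟩ := hcd.contDiffOn le_rfl (by simp)
  obtain ⟨ε, hε, hball⟩ := Metric.mem_nhds_iff.mp hu_nhds
  set v : Set ℝ := Metric.ball (0:ℝ) ε with hvdef
  have hv_open : IsOpen v := Metric.isOpen_ball
  have hv0 : (0:ℝ) ∈ v := Metric.mem_ball_self hε
  have hv : ContDiffOn ℝ (n : WithTop ℕ∞) h₂ v := hu.mono hball
  have hvU : UniqueDiffOn ℝ v := hv_open.uniqueDiffOn
  -- uniform bound for the derivatives of h₂ near 0
  set G : ℝ → ℝ := fun y => ∑ i ∈ Finset.range (n+1), ‖iteratedFDerivWithin ℝ i h₂ v y‖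
    with hGdef
  have hGcont : ContinuousOn G v := by
    apply continuousOn_finset_sum
    intro i hi
    exact (hv.continuousOn_iteratedFDerivWithin
      (by exact_mod_cast Nat.lt_succ_iff.mp (Finset.mem_range.mp hi)) hvU).norm
  set C : ℝ := G 0 + 1 with hCdef
  have hGat : ContinuousAt G 0 := hGcont.continuousAt (hv_open.mem_nhds hv0)
  have hGlt : ∀ᶠ y in nhds (0:ℝ), G y < C ∧ y ∈ v :=
    (hGat.eventually_lt_const (by simp [hCdef])).and (hv_open.mem_nhds hv0)
  obtain ⟨ε', hε'pos, hε'⟩ := Metric.eventually_nhds_iff_ball.mp hGlt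
  -- bound on derivatives of h₂ at points of ball 0 ε'
  have hC : ∀ y ∈ Metric.ball (0:ℝ) ε', ∀ i, i ≤ n → ‖iteratedFDerivWithin ℝ i h₂ v y‖ ≤ C := by
    intro y hy i hi
    refine le_trans ?_ (hε' y hy).1.le
    exact Finset.single_le_sum (f := fun j => ‖iteratedFDerivWithin ℝ j h₂ v y‖)
      (fun j _ => norm_nonneg _) (Finset.mem_range.mpr (Nat.lt_succ_of_le hi))
  -- choose δ so that ψ maps (0, δ) into ball 0 ε'
  have hmem : ∀ᶠ t in nhdsWithin 0 (Ioi (0:ℝ)), ψ t ∈ Metric.ball (0:ℝ) ε' :=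
    hψ0 (Metric.ball_mem_nhds _ hε'pos)
  obtain ⟨δ, hδpos, hδ⟩ := (nhdsGT_basis (0:ℝ)).eventually_iff.mp hmem
  set s : Set ℝ := Ioo (0:ℝ) δ with hsdef
  have hs_open : IsOpen s := isOpen_Ioo
  have hsU : UniqueDiffOn ℝ s := hs_open.uniqueDiffOn
  have hst : MapsTo ψ s v := fun t ht => (hε' _ (hδ ht)).2
  -- ψ is smooth on s
  have hf : ContDiffOn ℝ (n : WithTop ℕ∞) ψ s := by
    apply ContDiffOn.mul contDiffOn_id
    apply Real.contDiff_exp.comp_contDiffOn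
    exact ContDiffOn.div contDiffOn_const contDiffOn_id (fun t ht => ne_of_gt ht.1)
  -- sum of norms of derivatives of ψ
  set S : ℝ → ℝ := fun t => ∑ i ∈ Finset.Icc 1 n, ‖iteratedDeriv i ψ t‖ with hSdef
  have hS0 : Tendsto S (nhdsWithin 0 (Ioi (0:ℝ))) (nhds 0) := by
    have : Tendsto (fun t => ∑ i ∈ Finset.Icc 1 n, ‖iteratedDeriv i ψ t‖)
        (nhdsWithin 0 (Ioi (0:ℝ))) (nhds (∑ i ∈ Finset.Icc 1 n, (0:ℝ))) := by
      apply tendsto_finset_sum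
      intro i hi
      obtain ⟨k, rfl⟩ := Nat.exists_eq_add_of_le (Finset.mem_Icc.mp hi).1
      have h1 : Tendsto (fun t => ‖(Pq k).eval t⁻¹ * Real.exp (-1 / t)‖)
          (nhdsWithin 0 (Ioi (0:ℝ))) (nhds 0) := by
        simpa using (tendsto_aux (Pq k)).norm
      apply h1.congr'
      filter_upwards [self_mem_nhdsWithin] with t ht
      rw [Nat.add_comm 1 k] at *
      rw [iteratedDeriv_psi k t ht]
    simpa only [Finset.sum_const_zero] using this
  have hSle : ∀ t ∈ Ioi (0:ℝ), ∀ i, 1 ≤ i → i ≤ n → ‖iteratedDeriv i ψ t‖ ≤ S t := by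
    intro t ht i h1 h2
    exact Finset.single_le_sum (f := fun j => ‖iteratedDeriv j ψ t‖)
      (fun j _ => norm_nonneg _) (Finset.mem_Icc.mpr ⟨h1, h2⟩)
  -- main estimate
  rw [NormedAddCommGroup.tendsto_nhds_zero]
  intro ε₀ hε₀
  -- choose δ'
  have hδ'ev : ∀ᶠ d in nhdsWithin 0 (Ioi (0:ℝ)),
      ((n.factorial : ℝ) * C * d ^ n < ε₀ ∧ d ≤ 1) ∧ 0 < d := by
    have hcont : Tendsto (fun d : ℝ => (n.factorial : ℝ) * C * d ^ n) (nhds 0) (nhds 0) := by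
      have h : Tendsto (fun d : ℝ => (n.factorial : ℝ) * C * d ^ n) (nhds 0)
          (nhds ((n.factorial : ℝ) * C * 0 ^ n)) := ((continuous_const (y := (n.factorial : ℝ) * C)).mul (continuous_pow n (M := ℝ))).tendsto 0
      simpa [zero_pow (Nat.one_le_iff_ne_zero.mp hn)] using h
    refine (((hcont.mono_left nhdsWithin_le_nhds).eventually_lt_const hε₀).and ?_).and ?_
    · filter_upwards [Ioo_mem_nhdsGT (by norm_num : (0:ℝ) < 1)] with d hd
      exact hd.2.le
    · filter_upwards [self_mem_nhdsWithin] with d hd using hd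
  obtain ⟨δ', ⟨⟨hδ'lt, hδ'le1⟩, hδ'pos⟩⟩ := hδ'ev.exists
  -- now the eventual bound
  filter_upwards [Ioo_mem_nhdsGT hδpos,
    hS0.eventually_lt_const (pow_pos hδ'pos n),
    self_mem_nhdsWithin] with t hts hSt htpos
  have key : ‖iteratedFDerivWithin ℝ n (h₂ ∘ ψ) s t‖ ≤ (n.factorial : ℝ) * C * δ' ^ n := by
    apply norm_iteratedFDerivWithin_comp_le hv hf le_rfl hvU hsU hst hts
    · intro i hi
      exact hC _ (hδ hts) i hi
    · intro i h1 h2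
      rw [iteratedFDerivWithin_of_isOpen i hs_open hts,
        norm_iteratedFDeriv_eq_norm_iteratedDeriv]
      calc ‖iteratedDeriv i ψ t‖ ≤ S t := hSle t htpos i h1 h2
        _ ≤ δ' ^ n := hSt.le
        _ ≤ δ' ^ i := pow_le_pow_of_le_one hδ'pos.le hδ'le1 h2
  have heq : ‖iteratedDeriv n (fun t : ℝ => h₂ (t * Real.exp (-1 / t))) t‖
      = ‖iteratedFDerivWithin ℝ n (h₂ ∘ ψ) s t‖ := by
    rw [← norm_iteratedFDeriv_eq_norm_iteratedDeriv,
      iteratedFDerivWithin_of_isOpen n hs_open hts]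
    rfl
  rw [heq]
  exact lt_of_le_of_lt key hδ'lt
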